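/- For λ, μ ∈ K, the degree-(m+2) codifferentials d_λ = ((0,1),(0,0),(λ,0)) and d_μ = ((0,1),(0,0),(μ,0)) are equivalent if and only if λ = μ. -/
import Mathlib


namespace LinfClassification

variable {K : Type*} [Field K] [CharZero K]

/-- A degree-(m+2) structure `((a₁,a₂),(a₃,a₄),(a₅,a₆))` on the 1|2-dimensional
graded space, encoding the odd coderivation
`d = a₁ψ^{1,0,m+1}_3 + a₂ψ^{0,1,m+1}_3 + a₃ψ^{0,0,m+2}_1 + a₄ψ^{0,0,m+2}_2
 + a₅ψ^{1,1,m}_1 + a₆ψ^{1,1,m}_2`. -/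
abbrev Str (K : Type*) := (K × K) × (K × K) × (K × K)

/-- The six codifferential equations expressing `[d,d] = 0`. -/
def IsCodiff (m : ℕ) (d : Str K) : Prop :=
  d.1.1 * d.2.2.1 + d.1.2 * d.2.2.2 = 0 ∧
  d.1.1 * d.2.1.1 + d.1.2 * d.2.1.2 = 0 ∧
  d.2.1.1 * (d.2.2.1 + ((m : K) + 2) * d.1.2) = 0 ∧
  d.2.1.2 * (d.2.2.1 + ((m : K) + 2) * d.1.2) = 0 ∧
  d.2.1.1 * (d.2.2.2 - ((m : K) + 2) * d.1.1) = 0 ∧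
  d.2.1.2 * (d.2.2.2 - ((m : K) + 2) * d.1.1) = 0

/-- Action of `(g, q) ∈ GL₂(K) × Kˣ` with `g = [[p, q'], [r, s]]`
(`det g = p·s - q'·r ≠ 0`) and scalar `t ≠ 0` on a degree-(m+2) structure:
`(g,t)·(u,v,w) = (tᵐ·(u g), t^{m+2}·g⁻¹ v, det(g)·tᵐ·g⁻¹ w)`,
`u` a row vector and `v, w` column vectors. -/
def act (m : ℕ) (p q r s t : K) (d : Str K) : Str K :=
  ((t ^ m * (d.1.1 * p + d.1.2 * r), t ^ m * (d.1.1 * q + d.1.2 * s)),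
   (t ^ (m + 2) * (p * s - q * r)⁻¹ * (s * d.2.1.1 - q * d.2.1.2),
    t ^ (m + 2) * (p * s - q * r)⁻¹ * (-r * d.2.1.1 + p * d.2.1.2)),
   (t ^ m * (s * d.2.2.1 - q * d.2.2.2),
    t ^ m * (-r * d.2.2.1 + p * d.2.2.2)))

/-- Linear equivalence: two degree-(m+2) structures lie in the same orbit. -/
def Equiv' (m : ℕ) (d d' : Str K) : Prop :=
  ∃ p q r s t : K, p * s - q * r ≠ 0 ∧ t ≠ 0 ∧ act m p q r s t d = d'

/-- The normal form `d_∞ = ψ^{1,1,m}_1`. -/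
def dInf : Str K := ((0, 0), (0, 0), (1, 0))

/-- The normal form `d_λ = ψ^{0,1,m+1}_3 + λψ^{1,1,m}_1`. -/
def dLam (lam : K) : Str K := ((0, 1), (0, 0), (lam, 0))

/-- The normal form `d_* = ψ^{0,0,m+2}_1`. -/
def dStar : Str K := ((0, 0), (1, 0), (0, 0))

/-- The normal form `d_# = ψ^{0,1,m+1}_3 + ψ^{0,0,m+2}_1 - (m+2)ψ^{1,1,m}_1`. -/
def dSharp (m : ℕ) : Str K := ((0, 1), (1, 0), (-((m : K) + 2), 0))

/-- The codifferentials `d_λ` and `d_μ` are equivalent iff `λ = μ`. -/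
theorem dLam_equiv_iff (m : ℕ) (lam mu : K) :
    Equiv' m (dLam lam) (dLam mu) ↔ lam = mu := by
  constructor
  · rintro ⟨p, q, r, s, t, hdet, ht, h⟩
    simp only [act, dLam, Prod.mk.injEq] at h
    obtain ⟨⟨h1, h2⟩, _, h3, _⟩ := h
    linear_combination h3 - lam * h2
  · rintro rfl
    exact ⟨1, 0, 0, 1, 1, by norm_num, one_ne_zero, by simp [act, dLam]⟩

end LinfClassification
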